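/- Let X be a measurable space, let μ₁ and μ₂ be probability measures on X, and let r : X × X → ℝ≥0 be a measurable density such that the joint measure ν := (μ₁ ⊗ μ₂).withDensity r is a probability measure (i.e., ∫ r d(μ₁ ⊗ μ₂) = 1). Let z : X → ℝ^d be a measurable embedding map such that the function f(x₁, x₂) := ⟨z x₁, z x₂⟩ is in L²(μ₁ ⊗ μ₂) and r is in L²(μ₁ ⊗ μ₂). Let w > 0 and set λ := w/2. Then the co-occurrence modeling loss equals a positive multiple of the spectral contrastive loss plus a constant independent of z: ∫ (w·⟨z x₁, z x₂⟩ − r(x₁, x₂))² d(μ₁ ⊗ μ₂) = 2w · ( ∫ (−⟨z x₁, z x₂⟩) dν + λ · ∫ ⟨z x₁, z x₂⟩² d(μ₁ ⊗ μ₂) ) + ∫ r² d(μ₁ ⊗ μ₂). -/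

import Mathlib

open MeasureTheory
open scoped NNReal ENNReal

/-- **Proposition 1 (co-occurrence modeling ↔ spectral contrastive loss).**
Let `μ₁, μ₂` be probability measures on `X`, `r` a measurable nonnegative density such
that `ν := (μ₁ ⊗ μ₂).withDensity r` is a probability measure, and `z : X → ℝ^d`
measurable with `f (x₁, x₂) := ⟨z x₁, z x₂⟩` and `r` both in `L²(μ₁ ⊗ μ₂)`.
For `w > 0` and `λ = w / 2`, the co-occurrence loss equals `2w` times the spectral
contrastive loss plus a constant (namely `∫ r²`) independent of `z`. -/
theorem cooccurrence_loss_eq_spectral_loss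
    {X : Type*} [MeasurableSpace X] (μ₁ μ₂ : Measure X)
    [IsProbabilityMeasure μ₁] [IsProbabilityMeasure μ₂]
    (d : ℕ) (z : X → EuclideanSpace ℝ (Fin d)) (hz : Measurable z)
    (r : X × X → ℝ≥0) (hr : Measurable r)
    (ν : Measure (X × X))
    (hν : ν = (μ₁.prod μ₂).withDensity (fun p => (r p : ℝ≥0∞)))
    (hνprob : IsProbabilityMeasure ν)
    (f : X × X → ℝ)
    (hf : f = fun p => (inner ℝ (z p.1) (z p.2) : ℝ))
    (hfL2 : MemLp f 2 (μ₁.prod μ₂))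
    (hrL2 : MemLp (fun p => (r p : ℝ)) 2 (μ₁.prod μ₂))
    (w : ℝ) (hw : 0 < w) (lam : ℝ) (hlam : lam = w / 2) :
    ∫ p, (w * f p - (r p : ℝ)) ^ 2 ∂(μ₁.prod μ₂)
      = 2 * w *
          ((∫ p, (- f p) ∂ν) + lam * ∫ p, (f p) ^ 2 ∂(μ₁.prod μ₂))
        + ∫ p, ((r p : ℝ)) ^ 2 ∂(μ₁.prod μ₂) := by
  set μ := μ₁.prod μ₂ with hμ
  have hfm : AEStronglyMeasurable f μ := hfL2.1
  have hrm : AEStronglyMeasurable (fun p => (r p : ℝ)) μ := hrL2.1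
  have hf2 : Integrable (fun p => f p ^ 2) μ := hfL2.integrable_sq
  have hr2 : Integrable (fun p => ((r p : ℝ)) ^ 2) μ := hrL2.integrable_sq
  have hfr : Integrable (fun p => f p * (r p : ℝ)) μ := by
    refine Integrable.mono' ((hf2.add hr2).const_mul (1 / 2)) (hfm.mul hrm) ?_
    filter_upwards with p
    have h1 := sq_nonneg (|f p| - |(r p : ℝ)|)
    have h2 := sq_abs (f p)
    have h3 := sq_abs ((r p : ℝ))
    simp only [Real.norm_eq_abs, Pi.add_apply, abs_mul]
    nlinarith [abs_nonneg (f p), abs_nonneg ((r p : ℝ))]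
  -- integral against ν
  have hνint : ∫ p, (- f p) ∂ν = - ∫ p, f p * (r p : ℝ) ∂μ := by
    rw [hν, integral_withDensity_eq_integral_smul hr (fun p => - f p), ← integral_neg]
    refine integral_congr_ae (Filter.Eventually.of_forall fun p => ?_)
    simp [NNReal.smul_def, mul_comm]
  have hexpand : (fun p => (w * f p - (r p : ℝ)) ^ 2)
      = fun p => w ^ 2 * f p ^ 2 - 2 * w * (f p * (r p : ℝ)) + (r p : ℝ) ^ 2 := by
    funext p; ring
  have hA : Integrable (fun p => w ^ 2 * f p ^ 2 - 2 * w * (f p * (r p : ℝ))) μ :=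
    (hf2.const_mul (w ^ 2)).sub (hfr.const_mul (2 * w))
  rw [hexpand,
    integral_add hA hr2,
    integral_sub (hf2.const_mul (w ^ 2)) (hfr.const_mul (2 * w)),
    integral_const_mul, integral_const_mul, hνint, hlam]
  ring
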